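/- Let m ≥ 2 and let a₁,…,a_m, b₁,…,b_m be unit vectors in a real inner product space such that Σ_{i=1}^{m−1} (angle(a_i,b_i) + angle(a_{i+1},b_i)) + angle(a_m,b_m) = angle(a₁,b_m). Then there exists a subspace S of the space with dim S ≤ 2 such that a_i ∈ S and b_i ∈ S for all i = 1,…,m. -/
import Mathlib

open InnerProductGeometry Real Cardinal

section Aux

variable {E : Type*} [NormedAddCommGroup E] [InnerProductSpace ℝ E]

local notation "⟪" x ", " y "⟫" => @inner ℝ _ _ x y

private lemma arccos_le_arccos' {s t : ℝ} (h : s ≤ t) : Real.arccos t ≤ Real.arccos s := by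
  unfold Real.arccos
  have := Real.monotone_arcsin h
  linarith

private lemma cos_angle_unit {x y : E} (hx : ‖x‖ = 1) (hy : ‖y‖ = 1) :
    Real.cos (angle x y) = ⟪x, y⟫ := by
  rw [cos_angle, hx, hy, mul_one, div_one]

private lemma norm_perp_unit {x y : E} (hx : ‖x‖ = 1) (hy : ‖y‖ = 1) :
    ‖x - ⟪x, y⟫ • y‖ = Real.sin (angle x y) := by
  have hsin : Real.sin (angle x y) ^ 2 = 1 - ⟪x, y⟫ ^ 2 := by
    have := Real.sin_sq_add_cos_sq (angle x y)
    rw [cos_angle_unit hx hy] at this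
    linarith
  have hnorm : ‖x - ⟪x, y⟫ • y‖ ^ 2 = 1 - ⟪x, y⟫ ^ 2 := by
    rw [norm_sub_sq_real, real_inner_smul_right, norm_smul, hx, hy, Real.norm_eq_abs,
      mul_one, sq_abs]
    ring
  have h1 : 0 ≤ Real.sin (angle x y) :=
    Real.sin_nonneg_of_nonneg_of_le_pi (angle_nonneg x y) (angle_le_pi x y)
  nlinarith [norm_nonneg (x - ⟪x, y⟫ • y)]

private lemma inner_perp_eq {x y z : E} (hy : ‖y‖ = 1) :
    ⟪x - ⟪x, y⟫ • y, z - ⟪z, y⟫ • y⟫ = ⟪x, z⟫ - ⟪x, y⟫ * ⟪z, y⟫ := by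
  simp only [inner_sub_left, inner_sub_right, real_inner_smul_left, real_inner_smul_right,
    real_inner_self_eq_norm_sq, hy]
  rw [real_inner_comm y z]
  ring

/-- Core estimate: for unit vectors, `cos (∠xy + ∠yz) ≤ ⟪x, z⟫`. -/
private lemma cos_add_le_inner {x y z : E} (hx : ‖x‖ = 1) (hy : ‖y‖ = 1) (hz : ‖z‖ = 1) :
    Real.cos (angle x y + angle y z) ≤ ⟪x, z⟫ := by
  set x' := x - ⟪x, y⟫ • y with hx'
  set z' := z - ⟪z, y⟫ • y with hz'
  have h1 : ‖x'‖ = Real.sin (angle x y) := norm_perp_unit hx hy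
  have h2 : ‖z'‖ = Real.sin (angle y z) := by
    rw [angle_comm]; exact norm_perp_unit hz hy
  have h3 : ⟪x', z'⟫ = ⟪x, z⟫ - ⟪x, y⟫ * ⟪z, y⟫ := inner_perp_eq hy
  have h4 : -(‖x'‖ * ‖z'‖) ≤ ⟪x', z'⟫ := by
    have := abs_real_inner_le_norm x' z'
    rw [abs_le] at this
    exact this.1
  have h5 : Real.cos (angle x y) = ⟪x, y⟫ := cos_angle_unit hx hy
  have h6 : Real.cos (angle y z) = ⟪y, z⟫ := cos_angle_unit hy hz
  rw [Real.cos_add, h5, h6, h1, h2] at *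
  rw [real_inner_comm y z] at *
  nlinarith [h3, h4]

/-- The triangle inequality for angles between unit vectors. -/
private lemma angle_triangle_unit {x y z : E} (hx : ‖x‖ = 1) (hy : ‖y‖ = 1) (hz : ‖z‖ = 1) :
    angle x z ≤ angle x y + angle y z := by
  rcases le_or_gt (angle x y + angle y z) π with h | h
  · have h2 := cos_add_le_inner hx hy hz
    have hxz : angle x z = Real.arccos ⟪x, z⟫ := by
      rw [angle, hx, hz, mul_one, div_one]
    have h0 : 0 ≤ angle x y + angle y z := by
      have := angle_nonneg x y; have := angle_nonneg y z; linarith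
    calc angle x z = Real.arccos ⟪x, z⟫ := hxz
      _ ≤ Real.arccos (Real.cos (angle x y + angle y z)) := by
          exact arccos_le_arccos' h2
      _ = angle x y + angle y z := Real.arccos_cos h0 h
  · linarith [angle_le_pi x z]

private lemma eq_of_angle_eq_zero {x y : E} (hx : ‖x‖ = 1) (hy : ‖y‖ = 1)
    (h : angle x y = 0) : y = x := by
  rcases angle_eq_zero_iff.mp h with ⟨-, r, hr, rfl⟩
  have : ‖r • x‖ = |r| * ‖x‖ := norm_smul _ _
  rw [hy, hx, mul_one, abs_of_pos hr] at this
  rw [← this, one_smul]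

private lemma eq_neg_of_angle_eq_pi {x y : E} (hx : ‖x‖ = 1) (hy : ‖y‖ = 1)
    (h : angle x y = π) : y = -x := by
  rcases angle_eq_pi_iff.mp h with ⟨-, r, hr, rfl⟩
  have : ‖r • x‖ = |r| * ‖x‖ := norm_smul _ _
  rw [hy, hx, mul_one, abs_of_neg hr] at this
  have : r = -1 := by linarith
  rw [this, neg_one_smul]

/-- Equality case of the triangle inequality: if `∠xz = ∠xy + ∠yz` and `y ≠ ±x`,
then `z` lies in the span of `x` and `y`. -/
private lemma mem_span_of_angle_eq {x y z : E} (hx : ‖x‖ = 1) (hy : ‖y‖ = 1) (hz : ‖z‖ = 1)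
    (h0 : angle x y ≠ 0) (hpi : angle x y ≠ π)
    (h : angle x z = angle x y + angle y z) : z ∈ Submodule.span ℝ ({x, y} : Set E) := by
  set x' := x - ⟪x, y⟫ • y with hx'def
  set z' := z - ⟪z, y⟫ • y with hz'def
  have h1 : ‖x'‖ = Real.sin (angle x y) := norm_perp_unit hx hy
  have h2 : ‖z'‖ = Real.sin (angle y z) := by
    rw [angle_comm]; exact norm_perp_unit hz hy
  have h3 : ⟪x', z'⟫ = ⟪x, z⟫ - ⟪x, y⟫ * ⟪z, y⟫ := inner_perp_eq hy
  have hle : angle x y + angle y z ≤ π := h ▸ angle_le_pi x z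
  have hcos : Real.cos (angle x z) = ⟪x, z⟫ := cos_angle_unit hx hz
  have hkey : ⟪x', z'⟫ = -(‖x'‖ * ‖z'‖) := by
    have h5 : Real.cos (angle x y) = ⟪x, y⟫ := cos_angle_unit hx hy
    have h6 : Real.cos (angle y z) = ⟪y, z⟫ := cos_angle_unit hy hz
    have := Real.cos_add (angle x y) (angle y z)
    rw [← h, hcos, h5, h6] at this
    rw [h3, h1, h2, this, real_inner_comm y z]
    ring
  have hx'ne : x' ≠ 0 := by
    intro hc
    have : Real.sin (angle x y) = 0 := by rw [← h1, hc, norm_zero]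
    have hpos : 0 < Real.sin (angle x y) := Real.sin_pos_of_pos_of_lt_pi
      (lt_of_le_of_ne (angle_nonneg x y) (Ne.symm h0))
      (lt_of_le_of_ne (angle_le_pi x y) hpi)
    linarith
  -- equality in Cauchy–Schwarz for x' and -z'
  have heq : ⟪x', -z'⟫ = ‖x'‖ * ‖-z'‖ := by
    rw [inner_neg_right, norm_neg, hkey]; ring
  have hcol : ‖-z'‖ • x' = ‖x'‖ • (-z') := inner_eq_norm_mul_iff_real.mp heq
  have hz'eq : z' = (-(‖z'‖ / ‖x'‖)) • x' := by
    have hx'pos : (0:ℝ) < ‖x'‖ := norm_pos_iff.mpr hx'ne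
    rw [norm_neg] at hcol
    have h7 : (‖x'‖⁻¹ * ‖z'‖) • x' = -z' := by
      rw [mul_smul, hcol, smul_smul, inv_mul_cancel₀ (ne_of_gt hx'pos), one_smul]
    rw [div_eq_inv_mul, neg_smul, h7, neg_neg]
  have hxS : x ∈ Submodule.span ℝ ({x, y} : Set E) :=
    Submodule.subset_span (Set.mem_insert _ _)
  have hyS : y ∈ Submodule.span ℝ ({x, y} : Set E) :=
    Submodule.subset_span (Set.mem_insert_iff.mpr (Or.inr rfl))
  have hx'S : x' ∈ Submodule.span ℝ ({x, y} : Set E) := by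
    rw [hx'def]
    exact Submodule.sub_mem _ hxS (Submodule.smul_mem _ _ hyS)
  have hzdecomp : z = ⟪z, y⟫ • y + z' := by rw [hz'def]; abel
  rw [hzdecomp, hz'eq]
  exact Submodule.add_mem _ (Submodule.smul_mem _ _ hyS) (Submodule.smul_mem _ _ hx'S)

/-- The chain lemma: if the angles along a chain of unit vectors add up to the angle
between the endpoints, then the whole chain lies in a subspace of rank at most 2. -/
private lemma chain_lemma (n : ℕ) (v : ℕ → E) (hv : ∀ i ≤ n, ‖v i‖ = 1)
    (hsum : ∑ i ∈ Finset.range n, angle (v i) (v (i + 1)) = angle (v 0) (v n)) :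
    ∃ S : Submodule ℝ E, Module.rank ℝ S ≤ 2 ∧ ∀ i ≤ n, v i ∈ S := by
  have hv0 : v 0 ≠ 0 := by
    intro hc
    have := hv 0 (Nat.zero_le n); rw [hc, norm_zero] at this; norm_num at this
  -- upper bound: angle (v 0) (v k) ≤ partial sums
  have upper : ∀ k, k ≤ n → angle (v 0) (v k) ≤ ∑ i ∈ Finset.range k, angle (v i) (v (i + 1)) := by
    intro k
    induction k with
    | zero => intro _; simp [angle_self hv0]
    | succ k ih =>
      intro hk
      have hk' : k ≤ n := Nat.le_of_succ_le hk
      rw [Finset.sum_range_succ]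
      calc angle (v 0) (v (k + 1)) ≤ angle (v 0) (v k) + angle (v k) (v (k + 1)) :=
            angle_triangle_unit (hv 0 (Nat.zero_le n)) (hv k hk') (hv (k + 1) hk)
        _ ≤ _ := by linarith [ih hk']
  -- lower bound via downward chaining
  have lower : ∀ j k, k + j = n →
      angle (v 0) (v n) ≤ angle (v 0) (v k) + ∑ i ∈ Finset.Ico k n, angle (v i) (v (i + 1)) := by
    intro j
    induction j with
    | zero =>
      intro k hk
      subst hk
      simp [Nat.add_zero]
    | succ j ih =>
      intro k hk
      have hk1 : (k + 1) + j = n := by omega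
      have hkn : k < n := by omega
      have := ih (k + 1) hk1
      have htri : angle (v 0) (v (k + 1)) ≤ angle (v 0) (v k) + angle (v k) (v (k + 1)) :=
        angle_triangle_unit (hv 0 (Nat.zero_le n)) (hv k (by omega)) (hv (k + 1) (by omega))
      rw [Finset.sum_eq_sum_Ico_succ_bot hkn]
      linarith
  -- exact partial sums
  have eqk : ∀ k, k ≤ n →
      angle (v 0) (v k) = ∑ i ∈ Finset.range k, angle (v i) (v (i + 1)) := by
    intro k hk
    have h1 := upper k hk
    have h2 := lower (n - k) k (by omega)
    have hsplit : (∑ i ∈ Finset.range k, angle (v i) (v (i + 1)))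
        + ∑ i ∈ Finset.Ico k n, angle (v i) (v (i + 1))
        = ∑ i ∈ Finset.range n, angle (v i) (v (i + 1)) :=
      Finset.sum_range_add_sum_Ico _ hk
    rw [hsum] at hsplit
    linarith
  have stepEq : ∀ k, k + 1 ≤ n →
      angle (v 0) (v (k + 1)) = angle (v 0) (v k) + angle (v k) (v (k + 1)) := by
    intro k hk
    have h1 := eqk k (by omega)
    have h2 := eqk (k + 1) hk
    rw [Finset.sum_range_succ] at h2
    linarith
  by_cases hall : ∀ i ≤ n, v i ∈ Submodule.span ℝ ({v 0} : Set E)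
  · refine ⟨Submodule.span ℝ ({v 0} : Set E), ?_, hall⟩
    calc Module.rank ℝ (Submodule.span ℝ ({v 0} : Set E)) ≤ #({v 0} : Set E) :=
          rank_span_le _
      _ ≤ 2 := by
          rw [Cardinal.mk_singleton]
          exact one_le_two
  · push_neg at hall
    obtain ⟨j0, hj0n, hj0⟩ := hall
    have hPex : ∃ j, j ≤ n ∧ v j ∉ Submodule.span ℝ ({v 0} : Set E) := ⟨j0, hj0n, hj0⟩
    classical
    set j := Nat.find hPex with hjdef
    obtain ⟨hjn, hjspan⟩ := Nat.find_spec hPex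
    have hjmin : ∀ i < j, i ≤ n → v i ∈ Submodule.span ℝ ({v 0} : Set E) := by
      intro i hi hin
      by_contra hc
      exact Nat.find_min hPex hi ⟨hin, hc⟩
    refine ⟨Submodule.span ℝ ({v 0, v j} : Set E), ?_, ?_⟩
    · calc Module.rank ℝ (Submodule.span ℝ ({v 0, v j} : Set E))
          ≤ #({v 0, v j} : Set E) := rank_span_le _
        _ ≤ 2 := by
            refine le_trans (Cardinal.mk_insert_le) ?_
            rw [Cardinal.mk_singleton, one_add_one_eq_two]
    · -- membership by strong induction
      intro k hk
      induction k using Nat.strong_induction_on with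
      | _ k ih =>
        rcases lt_trichotomy k j with hlt | heq | hgt
        · have : v k ∈ Submodule.span ℝ ({v 0} : Set E) := hjmin k hlt hk
          exact Submodule.span_mono (Set.singleton_subset_iff.mpr (Set.mem_insert _ _)) this
        · subst heq
          exact Submodule.subset_span (Set.mem_insert_iff.mpr (Or.inr rfl))
        · -- k > j, so k = p + 1 with p ≥ j
          obtain ⟨p, rfl⟩ : ∃ p, k = p + 1 := ⟨k - 1, by omega⟩
          have hpn : p ≤ n := by omega
          have hpk : p < p + 1 := Nat.lt_succ_self p
          have hpS : v p ∈ Submodule.span ℝ ({v 0, v j} : Set E) := ih p hpk hpn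
          have hstep := stepEq p hk
          have hu0 : ‖v 0‖ = 1 := hv 0 (Nat.zero_le n)
          have hup : ‖v p‖ = 1 := hv p hpn
          have huk : ‖v (p + 1)‖ = 1 := hv (p + 1) hk
          by_cases hz : angle (v 0) (v p) = 0
          · -- then the partial sum to p is 0, so angle (v 0) (v j) = 0, contradiction
            exfalso
            have hep := eqk p hpn
            rw [hz] at hep
            have hjp : j ≤ p := by omega
            have hjle : angle (v 0) (v j) ≤ ∑ i ∈ Finset.range p, angle (v i) (v (i + 1)) := by
              refine le_trans (upper j hjn) ?_
              apply Finset.sum_le_sum_of_subset_of_nonneg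
              · exact Finset.range_subset_range.mpr hjp
              · intro i _ _; exact angle_nonneg _ _
            have hj0' : angle (v 0) (v j) = 0 := le_antisymm (by linarith) (angle_nonneg _ _)
            have : v j = v 0 := eq_of_angle_eq_zero hu0 (hv j hjn) hj0'
            rw [this] at hjspan
            exact hjspan (Submodule.mem_span_singleton_self _)
          · by_cases hp : angle (v 0) (v p) = π
            · -- v p = -v 0, and then angle (v p) (v (p+1)) = 0, so v (p+1) = v p
              have hang0 : angle (v p) (v (p + 1)) = 0 := by
                have := angle_le_pi (v 0) (v (p + 1))
                have := angle_nonneg (v p) (v (p + 1))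
                rw [hp] at hstep
                linarith
              have : v (p + 1) = v p := eq_of_angle_eq_zero hup huk hang0
              rw [this]; exact hpS
            · have hmem : v (p + 1) ∈ Submodule.span ℝ ({v 0, v p} : Set E) :=
                mem_span_of_angle_eq hu0 hup huk hz hp hstep
              have hsub : ({v 0, v p} : Set E) ⊆
                  (Submodule.span ℝ ({v 0, v j} : Set E) : Set E) := by
                intro w hw
                rcases hw with rfl | rfl
                · exact Submodule.subset_span (Set.mem_insert _ _)
                · exact hpS
              exact Submodule.span_le.mpr hsub hmem

end Aux

open InnerProductGeometry in
/-- Let `m ≥ 2` and let `a₁,…,a_m, b₁,…,b_m` be unit vectors in a real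
inner product space such that
`Σ_{i=1}^{m−1} (angle(a_i,b_i) + angle(a_{i+1},b_i)) + angle(a_m,b_m) = angle(a₁,b_m)`.
Then there is a subspace `S` with `dim S ≤ 2` containing all the `a_i` and `b_i`. -/
theorem stmt_13 {E : Type*} [NormedAddCommGroup E] [InnerProductSpace ℝ E]
    (m : ℕ) (hm : 2 ≤ m) (a b : ℕ → E)
    (ha : ∀ i ∈ Finset.Icc 1 m, ‖a i‖ = 1)
    (hb : ∀ i ∈ Finset.Icc 1 m, ‖b i‖ = 1)
    (hsum : (∑ i ∈ Finset.Icc 1 (m - 1), (angle (a i) (b i) + angle (a (i + 1)) (b i)))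
        + angle (a m) (b m) = angle (a 1) (b m)) :
    ∃ S : Submodule ℝ E, Module.rank ℝ S ≤ 2 ∧
      ∀ i ∈ Finset.Icc 1 m, a i ∈ S ∧ b i ∈ S := by
  classical
  -- build the chain w 0 = a 1, w 1 = b 1, w 2 = a 2, w 3 = b 2, …
  set w : ℕ → E := fun k => if Even k then a (k / 2 + 1) else b (k / 2 + 1) with hw
  have hwa : ∀ t, w (2 * t) = a (t + 1) := by
    intro t
    simp only [hw]
    rw [if_pos (even_two_mul t), Nat.mul_div_cancel_left t (by norm_num)]
  have hwb : ∀ t, w (2 * t + 1) = b (t + 1) := by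
    intro t
    simp only [hw]
    rw [if_neg (by simp [parity_simps]), Nat.mul_add_div (by norm_num)]
  set n := 2 * m - 1 with hn
  have hunits : ∀ i ≤ n, ‖w i‖ = 1 := by
    intro i hi
    rcases Nat.even_or_odd i with he | ho
    · obtain ⟨t, rfl⟩ := he
      rw [show t + t = 2 * t by ring, hwa]
      exact ha _ (Finset.mem_Icc.mpr ⟨by omega, by omega⟩)
    · obtain ⟨t, rfl⟩ := ho
      rw [hwb]
      exact hb _ (Finset.mem_Icc.mpr ⟨by omega, by omega⟩)
  -- the chain sum equals the hypothesis sum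
  have pairsum : ∀ k, ∑ i ∈ Finset.range (2 * k), angle (w i) (w (i + 1))
      = ∑ t ∈ Finset.range k,
          (angle (w (2 * t)) (w (2 * t + 1)) + angle (w (2 * t + 1)) (w (2 * t + 2))) := by
    intro k
    induction k with
    | zero => simp
    | succ k ih =>
      rw [show 2 * (k + 1) = (2 * k + 1) + 1 by ring, Finset.sum_range_succ,
        Finset.sum_range_succ, Finset.sum_range_succ, ih,
        show 2 * k + 1 + 1 = 2 * (k + 1) by ring]
      ring
  have hchain : ∑ i ∈ Finset.range n, angle (w i) (w (i + 1)) = angle (w 0) (w n) := by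
    have hn2 : n = 2 * (m - 1) + 1 := by omega
    rw [hn2, Finset.sum_range_succ, pairsum (m - 1)]
    have hlast : angle (w (2 * (m - 1))) (w (2 * (m - 1) + 1)) = angle (a m) (b m) := by
      rw [hwa, hwb, show m - 1 + 1 = m by omega]
    have hIcc : Finset.Icc 1 (m - 1) = Finset.Ico 1 m := by
      rw [← Finset.Ico_add_one_right_eq_Icc]
      congr 1
      omega
    have hre : (∑ i ∈ Finset.Icc 1 (m - 1), (angle (a i) (b i) + angle (a (i + 1)) (b i)))
        = ∑ t ∈ Finset.range (m - 1),
            (angle (w (2 * t)) (w (2 * t + 1)) + angle (w (2 * t + 1)) (w (2 * t + 2))) := by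
      rw [hIcc, Finset.sum_Ico_eq_sum_range]
      refine Finset.sum_congr rfl ?_
      intro t _
      rw [hwa, hwb, show 2 * t + 2 = 2 * (t + 1) by ring, hwa, Nat.add_comm 1 t,
        angle_comm (b (t + 1)) (a (t + 1 + 1))]
    have h0 : w 0 = a 1 := by simpa using hwa 0
    have hend : w (2 * (m - 1) + 1) = b m := by
      rw [hwb, show m - 1 + 1 = m by omega]
    rw [hlast, ← hre, h0, hend]
    exact hsum
  obtain ⟨S, hrank, hmem⟩ := chain_lemma n w hunits hchain
  refine ⟨S, hrank, ?_⟩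
  intro i hi
  rw [Finset.mem_Icc] at hi
  constructor
  · have := hmem (2 * (i - 1)) (by omega)
    rwa [hwa, show i - 1 + 1 = i by omega] at this
  · have := hmem (2 * (i - 1) + 1) (by omega)
    rwa [hwb, show i - 1 + 1 = i by omega] at this
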